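/- Let K be a commutative ring and let F be an N-tuple of formal power series in N free (non-commuting) indeterminates with F_i = X_i − ∑_{k≥2}∑_{κ∈[N]^k} H_{i,κ} X_κ. Then F has a two-sided compositional inverse G with G_i = X_i + ∑_{k≥2}∑_{κ∈[N]^k} G_{i,κ} X_κ, where G_{i,κ} = ∑_{T ∈ S⃗_{i,κ}} ∏_{v internal} H_{τ(v), μ⃗(v)}. Here S⃗_{i,κ} is the set of typed planar rooted trees with root of type i, leaves of types κ_1,…,κ_k read left to right, every internal vertex having at least two children, and μ⃗(v) is the tuple of types of the children of v in planar order. -/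

import Mathlib

/-- Formal power series in `N` free (non-commuting) indeterminates with coefficients in `K`. -/
def FreeSeries (N : ℕ) (K : Type*) := List (Fin N) → K

/-- Multiplication of free power series, splitting words into prefix and suffix. -/
instance {N : ℕ} {K : Type*} [CommRing K] : Mul (FreeSeries N K) :=
  ⟨fun f g w => ∑ j ∈ Finset.range (w.length + 1), f (w.take j) * g (w.drop j)⟩

/-- The unit free power series. -/
instance {N : ℕ} {K : Type*} [CommRing K] : One (FreeSeries N K) :=
  ⟨fun w => if w = [] then 1 else 0⟩

/-- Composition of `N`-tuples of free power series (valid when the inner tuple has zero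
constant terms). -/
noncomputable def fcomp {N : ℕ} {K : Type*} [CommRing K]
    (F G : Fin N → FreeSeries N K) : Fin N → FreeSeries N K := fun i w =>
  ∑ j ∈ Finset.range (w.length + 1), ∑ γ : Fin j → Fin N,
    F i (List.ofFn γ) * (List.ofFn fun r => G (γ r)).prod w

/-- Typed planar rooted trees with vertex types in `{1,…,N}`: a tree is a typed leaf or a typed
vertex with an ordered (planar) list of subtrees. -/
inductive PTree (N : ℕ) : Type
  | leaf : Fin N → PTree N
  | node : Fin N → List (PTree N) → PTree N

/-- The type of the root of a planar tree. -/
def PTree.rootType {N : ℕ} : PTree N → Fin N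
  | .leaf j => j
  | .node j _ => j

/-- The word of leaf types of a planar tree, read from left to right. -/
def PTree.leafWord {N : ℕ} : PTree N → List (Fin N)
  | .leaf j => [j]
  | .node _ ts => ts.attach.flatMap fun t => PTree.leafWord t.1
decreasing_by
  have := List.sizeOf_lt_of_mem t.2
  simp only [PTree.node.sizeOf_spec]
  omega

/-- A planar tree is proper if each internal vertex has at least two children. -/
def PTree.Proper {N : ℕ} : PTree N → Prop
  | .leaf _ => True
  | .node _ ts => 2 ≤ ts.length ∧ ∀ t ∈ ts, PTree.Proper t

/-- The planar `H`-energy `∏_{v internal} H_{τ(v), μ⃗(v)}` of a planar tree, where `μ⃗(v)` is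
the tuple of types of the children of `v` in planar order. -/
def PTree.energy {N : ℕ} {K : Type*} [CommRing K]
    (H : Fin N → List (Fin N) → K) : PTree N → K
  | .leaf _ => 1
  | .node j ts => H j (ts.map PTree.rootType) * (ts.attach.map fun t => PTree.energy H t.1).prod
decreasing_by
  have := List.sizeOf_lt_of_mem t.2
  simp only [PTree.node.sizeOf_spec]
  omega

/-- The sum `∑_{T ∈ S⃗_{i,κ}} E_H(T)` of planar `H`-energies over all proper typed planar
rooted trees with root type `i` and leaf word `κ` (a finite set of trees). -/
noncomputable def ptreeSum {N : ℕ} {K : Type*} [CommRing K]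
    (H : Fin N → List (Fin N) → K) (i : Fin N) (w : List (Fin N)) : K :=
  ∑ᶠ (T : PTree N) (_ : T.Proper ∧ T.rootType = i ∧ T.leafWord = w), T.energy H

namespace FreeInv
variable {N : ℕ} {K : Type*} [CommRing K]

lemma mul_apply (f g : FreeSeries N K) (w : List (Fin N)) :
    (f * g) w = ∑ j ∈ Finset.range (w.length + 1), f (w.take j) * g (w.drop j) := rfl

lemma one_apply (w : List (Fin N)) : (1 : FreeSeries N K) w = if w = [] then 1 else 0 := rfl

lemma one_mul' (f : FreeSeries N K) (w : List (Fin N)) :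
    ((1 : FreeSeries N K) * f) w = f w := by
  rw [mul_apply, Finset.sum_eq_single 0]
  · simp [one_apply]
  · intro j hj hj0
    have : w.take j ≠ [] := by
      simp only [Finset.mem_range] at hj
      cases w with
      | nil => simp at hj; omega
      | cons a t =>
        cases j with
        | zero => omega
        | succ m => simp
    simp [one_apply, this]
  · simp

lemma mul_one' (f : FreeSeries N K) (w : List (Fin N)) :
    (f * (1 : FreeSeries N K)) w = f w := by
  rw [mul_apply, Finset.sum_eq_single w.length]
  · simp [one_apply]
  · intro j hj hj0
    have : w.drop j ≠ [] := by
      simp only [Finset.mem_range] at hj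
      intro h
      rw [List.drop_eq_nil_iff] at h
      omega
    simp [one_apply, this]
  · simp

lemma triangle (n : ℕ) (f : ℕ → ℕ → K) :
    ∑ t ∈ Finset.range (n+1), ∑ s ∈ Finset.range (t+1), f s (t - s)
    = ∑ s ∈ Finset.range (n+1), ∑ u ∈ Finset.range (n+1-s), f s u := by
  rw [Finset.sum_sigma', Finset.sum_sigma']
  refine Finset.sum_nbij' (fun p => ⟨p.2, p.1 - p.2⟩) (fun q => ⟨q.1 + q.2, q.1⟩) ?_ ?_ ?_ ?_ ?_
  · rintro ⟨x, y⟩ h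
    simp only [Finset.mem_sigma, Finset.mem_range] at *
    omega
  · rintro ⟨x, y⟩ h
    simp only [Finset.mem_sigma, Finset.mem_range] at *
    omega
  · rintro ⟨x, y⟩ h
    simp only [Finset.mem_sigma, Finset.mem_range] at h
    have : y + (x - y) = x := by omega
    simp [this]
  · rintro ⟨x, y⟩ h
    simp only [Finset.mem_sigma, Finset.mem_range] at h
    have : x + y - x = y := by omega
    simp [this]
  · rintro ⟨x, y⟩ h
    rfl

lemma mul_assoc' (f g h : FreeSeries N K) (w : List (Fin N)) :
    ((f * g) * h) w = (f * (g * h)) w := by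
  rw [mul_apply, mul_apply]
  have L : ∀ t ∈ Finset.range (w.length + 1),
      (f * g) (w.take t) * h (w.drop t)
      = ∑ s ∈ Finset.range (t+1),
          f (w.take s) * (g ((w.drop s).take (t - s)) * h ((w.drop s).drop (t - s))) := by
    intro t ht
    simp only [Finset.mem_range] at ht
    rw [mul_apply, Finset.sum_mul]
    have hlen : (w.take t).length = t := by
      rw [List.length_take]; omega
    rw [hlen]
    refine Finset.sum_congr rfl fun s hs => ?_
    simp only [Finset.mem_range] at hs
    rw [List.take_take, min_eq_left (by omega), List.drop_take, List.drop_drop,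
      Nat.add_sub_cancel' (by omega : s ≤ t)]
    ring
  rw [Finset.sum_congr rfl L]
  refine (triangle w.length fun s u =>
    f (w.take s) * (g ((w.drop s).take u) * h ((w.drop s).drop u))).trans ?_
  refine Finset.sum_congr rfl fun s hs => ?_
  simp only [Finset.mem_range] at hs
  rw [mul_apply, Finset.mul_sum, List.length_drop]
  have : w.length + 1 - s = w.length - s + 1 := by omega
  rw [this]


/-- Finset of words of length `j`. -/
def WL (N j : ℕ) : Finset (List (Fin N)) :=
  (Finset.univ : Finset (Fin j → Fin N)).image List.ofFn

lemma mem_WL {j : ℕ} {l : List (Fin N)} : l ∈ WL N j ↔ l.length = j := by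
  constructor
  · rintro h
    simp only [WL, Finset.mem_image] at h
    obtain ⟨γ, -, rfl⟩ := h
    simp
  · intro h
    subst h
    simp only [WL, Finset.mem_image]
    exact ⟨l.get, Finset.mem_univ _, List.ofFn_get l⟩

/-- Finset of words of length at most `n`. -/
def WLL (N n : ℕ) : Finset (List (Fin N)) := (Finset.range (n+1)).biUnion (WL N)

lemma mem_WLL {n : ℕ} {l : List (Fin N)} : l ∈ WLL N n ↔ l.length ≤ n := by
  simp only [WLL, Finset.mem_biUnion, Finset.mem_range, mem_WL]
  constructor
  · rintro ⟨j, hj, rfl⟩; omega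
  · intro h; exact ⟨l.length, by omega, rfl⟩

lemma sum_over_lists (n : ℕ) (φ : List (Fin N) → K) :
    ∑ j ∈ Finset.range (n+1), ∑ γ : Fin j → Fin N, φ (List.ofFn γ)
    = ∑ l ∈ WLL N n, φ l := by
  rw [WLL, Finset.sum_biUnion]
  · refine Finset.sum_congr rfl fun j _ => ?_
    rw [WL, Finset.sum_image]
    intro a _ b _ hab
    exact List.ofFn_injective hab
  · intro a ha b hb hab
    refine Finset.disjoint_left.2 fun l hla hlb => hab ?_
    rw [mem_WL] at hla hlb
    omega

/-- Composition of a single series with a tuple. -/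
noncomputable def scomp (f : FreeSeries N K) (C : Fin N → FreeSeries N K) :
    FreeSeries N K := fun w => ∑ l ∈ WLL N w.length, f l * (l.map C).prod w

lemma fcomp_eq_scomp (F C : Fin N → FreeSeries N K) (i : Fin N) (w : List (Fin N)) :
    fcomp F C i w = scomp (F i) C w := by
  show _ = ∑ l ∈ WLL N w.length, F i l * (l.map C).prod w
  rw [← sum_over_lists]
  refine Finset.sum_congr rfl fun j _ => Finset.sum_congr rfl fun γ _ => ?_
  rw [List.map_ofFn]
  rfl

lemma prod_append' (L1 L2 : List (FreeSeries N K)) (w : List (Fin N)) :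
    (L1 ++ L2).prod w = (L1.prod * L2.prod) w := by
  induction L1 generalizing w with
  | nil => simp only [List.nil_append, List.prod_nil]; rw [one_mul']
  | cons a L ih =>
    rw [List.cons_append, List.prod_cons, List.prod_cons, mul_apply]
    rw [show ((a * L.prod) * L2.prod) w = (a * (L.prod * L2.prod)) w from mul_assoc' _ _ _ _]
    rw [mul_apply]
    exact Finset.sum_congr rfl fun j _ => by rw [ih]

/-- vanishing: a product of more than `w.length` series with zero constant term vanishes. -/
lemma prod_short_zero (L : List (FreeSeries N K)) (h0 : ∀ f ∈ L, f [] = 0)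
    {w : List (Fin N)} (hw : w.length < L.length) : L.prod w = 0 := by
  induction L generalizing w with
  | nil => simp at hw
  | cons a L ih =>
    rw [List.prod_cons, mul_apply]
    refine Finset.sum_eq_zero fun j hj => ?_
    simp only [Finset.mem_range] at hj
    rcases Nat.eq_zero_or_pos j with rfl | hjp
    · simp [h0 a (by simp)]
    · have : (w.drop j).length < L.length := by
        rw [List.length_drop]
        simp only [List.length_cons] at hw
        omega
      rw [ih (fun f hf => h0 f (by simp [hf])) this, mul_zero]

def mono (γ : List (Fin N)) : FreeSeries N K := fun w => if w = γ then 1 else 0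

lemma prod_map_mono (γ : List (Fin N)) (w : List (Fin N)) :
    ((γ.map fun c => (mono [c] : FreeSeries N K)).prod) w = if w = γ then 1 else 0 := by
  induction γ generalizing w with
  | nil =>
    simp only [List.map_nil, List.prod_nil, one_apply]
  | cons c γ' ih =>
    rw [List.map_cons, List.prod_cons, mul_apply]
    cases w with
    | nil =>
      simp [mono]
    | cons a v =>
      rw [Finset.sum_eq_single 1]
      · simp only [List.take_cons, List.take_zero, List.drop_one, List.tail_cons, ih, mono]
        by_cases hac : a = c <;> by_cases hv : v = γ' <;>
          simp [hac, hv, List.cons.injEq]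
      · intro j hj hj1
        simp only [Finset.mem_range, List.length_cons] at hj
        have : (a :: v).take j ≠ [c] := by
          intro h
          have := congrArg List.length h
          rw [List.length_take] at this
          simp at this
          omega
        simp [mono, this]
      · intro h
        exact absurd (Finset.mem_range.2 (by simp only [List.length_cons]; omega)) h


lemma split_sum (n : ℕ) (ψ : List (Fin N) → List (Fin N) → K) :
    ∑ l ∈ WLL N n, ∑ s ∈ Finset.range (l.length+1), ψ (l.take s) (l.drop s)
    = ∑ u ∈ WLL N n, ∑ v ∈ WLL N (n - u.length), ψ u v := by
  rw [Finset.sum_sigma', Finset.sum_sigma']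
  refine Finset.sum_nbij' (fun p => ⟨p.1.take p.2, p.1.drop p.2⟩)
    (fun q => ⟨q.1 ++ q.2, q.1.length⟩) ?_ ?_ ?_ ?_ ?_
  · rintro ⟨l, s⟩ h
    simp only [Finset.mem_sigma, Finset.mem_range, mem_WLL] at *
    rw [List.length_take, List.length_drop]
    omega
  · rintro ⟨u, v⟩ h
    simp only [Finset.mem_sigma, Finset.mem_range, mem_WLL] at *
    rw [List.length_append]
    omega
  · rintro ⟨l, s⟩ h
    simp only [Finset.mem_sigma, Finset.mem_range, mem_WLL] at h
    dsimp only
    refine Sigma.ext (List.take_append_drop s l) (heq_of_eq ?_)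
    show (List.take s l).length = s
    rw [List.length_take]
    omega
  · rintro ⟨u, v⟩ h
    dsimp only
    exact Sigma.ext (by rw [List.take_left]) (heq_of_eq (by rw [List.drop_left]))
  · rintro ⟨l, s⟩ h
    rfl

lemma prod_prod_short (C : Fin N → FreeSeries N K) (hC : ∀ c, C c [] = 0)
    (u v w : List (Fin N)) (h : w.length < u.length + v.length) :
    ((u.map C).prod * (v.map C).prod) w = 0 := by
  rw [mul_apply]
  refine Finset.sum_eq_zero fun t ht => ?_
  simp only [Finset.mem_range] at ht
  have hC' : ∀ (x : List (Fin N)), ∀ f ∈ x.map C, f [] = 0 := by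
    intro x f hf
    obtain ⟨c, -, rfl⟩ := List.mem_map.1 hf
    exact hC c
  by_cases htu : t < u.length
  · rw [prod_short_zero _ (hC' u) (by rw [List.length_take, List.length_map]; omega), zero_mul]
  · rw [prod_short_zero _ (hC' v) (by rw [List.length_drop, List.length_map]; omega), mul_zero]

lemma scomp_mul (C : Fin N → FreeSeries N K) (hC : ∀ c, C c [] = 0)
    (f g : FreeSeries N K) (w : List (Fin N)) :
    scomp (f * g) C w = (scomp f C * scomp g C) w := by
  have hC' : ∀ (x : List (Fin N)), ∀ f ∈ x.map C, f [] = 0 := by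
    intro x f hf
    obtain ⟨c, -, rfl⟩ := List.mem_map.1 hf
    exact hC c
  have lhs : scomp (f * g) C w
      = ∑ u ∈ WLL N w.length, ∑ v ∈ WLL N w.length,
          f u * g v * ((u.map C).prod * (v.map C).prod) w := by
    show (∑ l ∈ WLL N w.length, (f * g) l * (l.map C).prod w) = _
    have e1 : ∀ l ∈ WLL N w.length, (f * g) l * (l.map C).prod w
        = ∑ s ∈ Finset.range (l.length + 1),
            f (l.take s) * g (l.drop s)
              * (((l.take s).map C).prod * ((l.drop s).map C).prod) w := by
      intro l _
      rw [mul_apply, Finset.sum_mul]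
      refine Finset.sum_congr rfl fun s _ => ?_
      rw [← prod_append', ← List.map_append, List.take_append_drop]
    rw [Finset.sum_congr rfl e1]
    refine (split_sum w.length fun u v =>
      f u * g v * ((u.map C).prod * (v.map C).prod) w).trans ?_
    refine Finset.sum_congr rfl fun u hu => ?_
    refine Finset.sum_subset (fun v hv => ?_) (fun v hv hv' => ?_)
    · rw [mem_WLL] at *; omega
    · rw [mem_WLL] at hu hv hv'
      rw [prod_prod_short C hC u v w (by omega), mul_zero]
  have rhs : ∀ t ∈ Finset.range (w.length + 1),
      scomp f C (w.take t) * scomp g C (w.drop t)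
      = ∑ u ∈ WLL N w.length, ∑ v ∈ WLL N w.length,
          (f u * (u.map C).prod (w.take t)) * (g v * (v.map C).prod (w.drop t)) := by
    intro t ht
    simp only [Finset.mem_range] at ht
    have e2 : scomp f C (w.take t) = ∑ u ∈ WLL N w.length, f u * (u.map C).prod (w.take t) := by
      show (∑ u ∈ WLL N (w.take t).length, _) = _
      refine Finset.sum_subset (fun u hu => ?_) (fun u hu hu' => ?_)
      · rw [mem_WLL] at *; rw [List.length_take] at hu; omega
      · rw [mem_WLL] at hu hu'
        rw [List.length_take] at hu'
        rw [prod_short_zero _ (hC' u)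
          (by rw [List.length_take, List.length_map]; omega), mul_zero]
    have e3 : scomp g C (w.drop t) = ∑ v ∈ WLL N w.length, g v * (v.map C).prod (w.drop t) := by
      show (∑ v ∈ WLL N (w.drop t).length, _) = _
      refine Finset.sum_subset (fun v hv => ?_) (fun v hv hv' => ?_)
      · rw [mem_WLL] at *; rw [List.length_drop] at hv; omega
      · rw [mem_WLL] at hv hv'
        rw [List.length_drop] at hv'
        rw [prod_short_zero _ (hC' v)
          (by rw [List.length_drop, List.length_map]; omega), mul_zero]
    rw [e2, e3, Finset.sum_mul_sum]
  have rhs2 : (scomp f C * scomp g C) w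
      = ∑ u ∈ WLL N w.length, ∑ v ∈ WLL N w.length,
          f u * g v * ((u.map C).prod * (v.map C).prod) w := by
    rw [mul_apply, Finset.sum_congr rfl rhs]
    refine Finset.sum_comm.trans ?_
    refine Finset.sum_congr rfl fun u _ => ?_
    refine Finset.sum_comm.trans ?_
    refine Finset.sum_congr rfl fun v _ => ?_
    rw [mul_apply, Finset.mul_sum]
    exact Finset.sum_congr rfl fun t _ => by ring
  rw [lhs, rhs2]

lemma scomp_one (C : Fin N → FreeSeries N K) (w : List (Fin N)) :
    scomp (1 : FreeSeries N K) C w = (1 : FreeSeries N K) w := by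
  show (∑ l ∈ WLL N w.length, (1 : FreeSeries N K) l * (l.map C).prod w) = _
  rw [Finset.sum_eq_single ([] : List (Fin N))]
  · simp [one_apply]
  · intro l _ hl
    simp [one_apply, hl]
  · intro h
    exact absurd (mem_WLL.2 (by simp)) h

lemma scomp_list (C : Fin N → FreeSeries N K) (hC : ∀ c, C c [] = 0)
    (L : List (FreeSeries N K)) (w : List (Fin N)) :
    ((L.map fun f => scomp f C).prod) w = scomp L.prod C w := by
  induction L generalizing w with
  | nil => rw [List.map_nil, List.prod_nil, scomp_one]
  | cons f L ih =>
    rw [List.map_cons, List.prod_cons, List.prod_cons, mul_apply, scomp_mul C hC, mul_apply]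
    exact Finset.sum_congr rfl fun j _ => by rw [ih]

lemma scomp_assoc (f : FreeSeries N K) (B C : Fin N → FreeSeries N K)
    (hB : ∀ c, B c [] = 0) (hC : ∀ c, C c [] = 0) (w : List (Fin N)) :
    scomp (scomp f B) C w = scomp f (fun c => scomp (B c) C) w := by
  have lhs : scomp (scomp f B) C w
      = ∑ l ∈ WLL N w.length, ∑ m ∈ WLL N w.length,
          (f m * (m.map B).prod l) * (l.map C).prod w := by
    show (∑ l ∈ WLL N w.length, scomp f B l * (l.map C).prod w) = _
    refine Finset.sum_congr rfl fun l hl => ?_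
    rw [mem_WLL] at hl
    show (∑ m ∈ WLL N l.length, f m * (m.map B).prod l) * _ = _
    rw [Finset.sum_mul]
    refine Finset.sum_subset (fun m hm => ?_) (fun m hm hm' => ?_)
    · rw [mem_WLL] at *; omega
    · rw [mem_WLL] at hm hm'
      rw [prod_short_zero _ (fun x hx => by
          obtain ⟨c, -, rfl⟩ := List.mem_map.1 hx; exact hB c)
        (by rw [List.length_map]; omega), mul_zero, zero_mul]
  rw [lhs]
  refine Finset.sum_comm.trans ?_
  show _ = ∑ m ∈ WLL N w.length, f m * ((m.map fun c => scomp (B c) C).prod) w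
  refine Finset.sum_congr rfl fun m _ => ?_
  have e : (m.map fun c => scomp (B c) C) = ((m.map B).map fun f => scomp f C) := by
    rw [List.map_map]; rfl
  rw [e, scomp_list C hC]
  show _ = f m * ∑ l ∈ WLL N w.length, (m.map B).prod l * (l.map C).prod w
  rw [Finset.mul_sum]
  exact Finset.sum_congr rfl fun l _ => by ring

lemma scomp_mono_right (f : FreeSeries N K) (w : List (Fin N)) :
    scomp f (fun c => mono [c]) w = f w := by
  show (∑ l ∈ WLL N w.length, f l * ((l.map fun c => (mono [c] : FreeSeries N K)).prod) w) = _
  rw [Finset.sum_eq_single w]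
  · rw [prod_map_mono]; simp
  · intro l _ hl
    rw [prod_map_mono, if_neg (Ne.symm hl), mul_zero]
  · intro h
    exact absurd (mem_WLL.2 le_rfl) h

lemma scomp_mono_left (C : Fin N → FreeSeries N K) (hC : ∀ c, C c [] = 0)
    (i : Fin N) (w : List (Fin N)) :
    scomp (mono [i]) C w = C i w := by
  show (∑ l ∈ WLL N w.length, mono [i] l * (l.map C).prod w) = _
  cases w with
  | nil =>
    rw [Finset.sum_eq_zero, (hC i)]
    intro l hl
    rw [mem_WLL] at hl
    have : l ≠ [i] := by
      intro h; subst h; simp at hl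
    simp [mono, this]
  | cons a v =>
    rw [Finset.sum_eq_single [i]]
    · rw [List.map_cons, List.map_nil, List.prod_cons, List.prod_nil, mul_one']
      simp [mono]
    · intro l _ hl
      simp [mono, hl]
    · intro h
      exact absurd (mem_WLL.2 (by simp only [List.length_cons, List.length_nil]; omega)) h

lemma leafWord_leaf (j : Fin N) : (PTree.leaf j).leafWord = [j] := by rw [PTree.leafWord]

lemma leafWord_node (j : Fin N) (ts : List (PTree N)) :
    (PTree.node j ts).leafWord = (ts.map PTree.leafWord).flatten := by
  rw [PTree.leafWord, List.flatMap_def, List.attach_map_val]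

lemma energy_node (H : Fin N → List (Fin N) → K) (j : Fin N) (ts : List (PTree N)) :
    (PTree.node j ts).energy H
      = H j (ts.map PTree.rootType) * (ts.map (PTree.energy H)).prod := by
  rw [PTree.energy, List.attach_map_val]

lemma energy_leaf (H : Fin N → List (Fin N) → K) (j : Fin N) :
    (PTree.leaf j).energy H = 1 := by rw [PTree.energy]

lemma proper_node {j : Fin N} {ts : List (PTree N)} :
    (PTree.node j ts).Proper ↔ 2 ≤ ts.length ∧ ∀ t ∈ ts, t.Proper := by
  rw [PTree.Proper]

lemma proper_leaf (j : Fin N) : (PTree.leaf j).Proper := by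
  rw [PTree.Proper]; trivial

theorem leafWord_ne_nil : ∀ (T : PTree N), T.Proper → T.leafWord ≠ []
  | .leaf j, _ => by simp [leafWord_leaf]
  | .node j [], h => by
    have := (proper_node.1 h).1
    simp at this
  | .node j (t :: rest), h => by
    rw [leafWord_node, List.map_cons, List.flatten_cons]
    intro hcontra
    rw [List.append_eq_nil_iff] at hcontra
    exact leafWord_ne_nil t ((proper_node.1 h).2 t (by simp)) hcontra.1
decreasing_by
  simp only [PTree.node.sizeOf_spec, List.cons.sizeOf_spec]
  omega

lemma len_le_flatten (ts : List (PTree N)) (h : ∀ t ∈ ts, t.Proper) :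
    ts.length ≤ ((ts.map PTree.leafWord).flatten).length := by
  induction ts with
  | nil => simp
  | cons t rest ih =>
    rw [List.map_cons, List.flatten_cons, List.length_append, List.length_cons]
    have h1 : 1 ≤ t.leafWord.length := by
      have := leafWord_ne_nil t (h t (by simp))
      cases hl : t.leafWord with
      | nil => exact absurd hl this
      | cons a l => simp
    have := ih (fun x hx => h x (by simp [hx]))
    omega

def Pset (i : Fin N) (w : List (Fin N)) : Set (PTree N) :=
  {T | T.Proper ∧ T.rootType = i ∧ T.leafWord = w}

def Qset (w : List (Fin N)) : Set (List (PTree N)) :=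
  {ts | (∀ t ∈ ts, t.Proper) ∧ (ts.map PTree.leafWord).flatten = w}

lemma two_le_leafWord {j : Fin N} {ts : List (PTree N)} (h : (PTree.node j ts).Proper) :
    2 ≤ (PTree.node j ts).leafWord.length := by
  obtain ⟨hlen, hts⟩ := proper_node.1 h
  rw [leafWord_node]
  exact le_trans hlen (len_le_flatten ts hts)

@[simp] lemma rootType_leaf (j : Fin N) : (PTree.leaf j).rootType = j := rfl
@[simp] lemma rootType_node (j : Fin N) (ts) : (PTree.node j ts).rootType = j := rfl

lemma flatten_ne_nil_of_proper {ts : List (PTree N)} (h : ∀ t ∈ ts, t.Proper)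
    (hne : ts ≠ []) : (ts.map PTree.leafWord).flatten ≠ [] := by
  cases ts with
  | nil => exact absurd rfl hne
  | cons t rest =>
    rw [List.map_cons, List.flatten_cons]
    intro hc
    rw [List.append_eq_nil_iff] at hc
    exact leafWord_ne_nil t (h t (by simp)) hc.1

lemma mem_Pset {i : Fin N} {w : List (Fin N)} {T : PTree N} :
    T ∈ Pset i w ↔ T.Proper ∧ T.rootType = i ∧ T.leafWord = w := Iff.rfl

lemma mem_Qset {w : List (Fin N)} {ts : List (PTree N)} :
    ts ∈ Qset (N := N) w ↔ (∀ t ∈ ts, t.Proper) ∧ (ts.map PTree.leafWord).flatten = w := Iff.rfl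

lemma finite_PQ : ∀ (n : ℕ), ∀ (w : List (Fin N)), w.length ≤ n →
    (∀ i, (Pset i w).Finite) ∧ (Qset (N := N) w).Finite := by
  intro n
  induction n using Nat.strong_induction_on with
  | _ n IH =>
    have hP : ∀ (v : List (Fin N)), v.length ≤ n → ∀ i, (Pset i v).Finite := by
      intro v hv i
      by_cases hv2 : v.length ≤ 1
      · refine Set.Finite.subset (Set.finite_singleton (PTree.leaf i)) ?_
        rintro T ⟨hT, hroot, hlw⟩
        cases T with
        | leaf j =>
          simp only [rootType_leaf] at hroot
          simp [hroot]
        | node j ts =>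
          exfalso
          have h2 := two_le_leafWord (j := j) (ts := ts) hT
          rw [hlw] at h2
          omega
      · push_neg at hv2
        have hn2 : 2 ≤ n := by omega
        have hQ2 : {ts : List (PTree N) | 2 ≤ ts.length ∧ (∀ t ∈ ts, t.Proper)
            ∧ (ts.map PTree.leafWord).flatten = v}.Finite := by
          have hsub : {ts : List (PTree N) | 2 ≤ ts.length ∧ (∀ t ∈ ts, t.Proper)
              ∧ (ts.map PTree.leafWord).flatten = v}
              ⊆ ⋃ j ∈ Finset.Icc 1 (v.length - 1),
                  (fun p : PTree N × List (PTree N) => p.1 :: p.2) ''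
                    ((⋃ c : Fin N, Pset c (v.take j)) ×ˢ Qset (v.drop j)) := by
            rintro ts ⟨h2, hprop, hflat⟩
            cases ts with
            | nil => simp at h2
            | cons t rest =>
              have hprop_t := hprop t (by simp)
              rw [List.map_cons, List.flatten_cons] at hflat
              have hrest_ne : (rest.map PTree.leafWord).flatten ≠ [] :=
                flatten_ne_nil_of_proper (fun x hx => hprop x (by simp [hx]))
                  (by intro h; subst h; simp at h2)
              have hj1 : 1 ≤ t.leafWord.length :=
                List.length_pos_iff.2 (leafWord_ne_nil t hprop_t)
              have hlen := congrArg List.length hflat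
              rw [List.length_append] at hlen
              have hr1 : 1 ≤ (rest.map PTree.leafWord).flatten.length :=
                List.length_pos_iff.2 hrest_ne
              have htake : v.take t.leafWord.length = t.leafWord := by
                rw [← hflat]; exact List.take_left' rfl
              have hdrop : v.drop t.leafWord.length = (rest.map PTree.leafWord).flatten := by
                rw [← hflat]; exact List.drop_left' rfl
              have hmem1 : t ∈ ⋃ c : Fin N, Pset c (v.take t.leafWord.length) :=
                Set.mem_iUnion.2 ⟨t.rootType, mem_Pset.2 ⟨hprop_t, rfl, htake.symm⟩⟩
              have hmem2 : rest ∈ Qset (N := N) (v.drop t.leafWord.length) :=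
                mem_Qset.2 ⟨fun x hx => hprop x (by simp [hx]), hdrop.symm⟩
              simp only [Set.mem_iUnion, Set.mem_image, Set.mem_prod, Finset.mem_Icc]
              exact ⟨t.leafWord.length, ⟨hj1, by omega⟩, (t, rest),
                ⟨Set.mem_iUnion.1 hmem1, hmem2⟩, rfl⟩
          refine Set.Finite.subset (Set.Finite.biUnion (Finset.finite_toSet _) ?_) hsub
          intro j hj
          simp only [Finset.coe_Icc, Set.mem_Icc] at hj
          refine Set.Finite.image _ (Set.Finite.prod ?_ ?_)
          · refine Set.finite_iUnion fun c => ?_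
            exact (IH (n-1) (by omega) (v.take j)
              (by rw [List.length_take]; omega)).1 c
          · exact (IH (n-1) (by omega) (v.drop j)
              (by rw [List.length_drop]; omega)).2
        refine Set.Finite.subset (hQ2.image (PTree.node i)) ?_
        rintro T ⟨hT, hroot, hlw⟩
        cases T with
        | leaf j =>
          exfalso
          rw [leafWord_leaf] at hlw
          have := congrArg List.length hlw
          simp at this
          omega
        | node j ts =>
          simp only [rootType_node] at hroot
          subst hroot
          exact ⟨ts, ⟨(proper_node.1 hT).1, (proper_node.1 hT).2,
            by rw [← leafWord_node]; exact hlw⟩, rfl⟩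
    intro w hw
    refine ⟨hP w hw, ?_⟩
    cases hwc : w with
    | nil =>
      refine Set.Finite.subset (Set.finite_singleton []) ?_
      rintro ts ⟨hprop, hflat⟩
      by_contra hne
      simp only [Set.mem_singleton_iff] at hne
      exact flatten_ne_nil_of_proper hprop hne hflat
    | cons a v =>
      have hsub : Qset (N := N) (a :: v)
          ⊆ {[]} ∪ ⋃ j ∈ Finset.Icc 1 (a :: v).length,
              (fun p : PTree N × List (PTree N) => p.1 :: p.2) ''
                ((⋃ c : Fin N, Pset c ((a :: v).take j)) ×ˢ Qset ((a :: v).drop j)) := by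
        rintro ts ⟨hprop, hflat⟩
        cases ts with
        | nil => simp at hflat
        | cons t rest =>
          have hprop_t := hprop t (by simp)
          rw [List.map_cons, List.flatten_cons] at hflat
          have hj1 : 1 ≤ t.leafWord.length :=
            List.length_pos_iff.2 (leafWord_ne_nil t hprop_t)
          have hlen := congrArg List.length hflat
          rw [List.length_append] at hlen
          have htake : (a :: v).take t.leafWord.length = t.leafWord := by
            rw [← hflat]; exact List.take_left' rfl
          have hdrop : (a :: v).drop t.leafWord.length = (rest.map PTree.leafWord).flatten := by
            rw [← hflat]; exact List.drop_left' rfl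
          have hmem1 : t ∈ ⋃ c : Fin N, Pset c ((a :: v).take t.leafWord.length) :=
            Set.mem_iUnion.2 ⟨t.rootType, mem_Pset.2 ⟨hprop_t, rfl, htake.symm⟩⟩
          have hmem2 : rest ∈ Qset (N := N) ((a :: v).drop t.leafWord.length) :=
            mem_Qset.2 ⟨fun x hx => hprop x (by simp [hx]), hdrop.symm⟩
          refine Set.mem_union_right _ ?_
          simp only [Set.mem_iUnion, Set.mem_image, Set.mem_prod, Finset.mem_Icc]
          exact ⟨t.leafWord.length, ⟨hj1, by simp only [List.length_cons] at hlen ⊢; omega⟩,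
            (t, rest), ⟨Set.mem_iUnion.1 hmem1, hmem2⟩, rfl⟩
      refine Set.Finite.subset (Set.Finite.union (Set.finite_singleton [])
        (Set.Finite.biUnion (Finset.finite_toSet _) ?_)) hsub
      intro j hj
      simp only [Finset.coe_Icc, Set.mem_Icc] at hj
      refine Set.Finite.image _ (Set.Finite.prod ?_ ?_)
      · refine Set.finite_iUnion fun c => ?_
        refine hP ((a :: v).take j) ?_ c
        rw [List.length_take]
        subst hwc
        omega
      · have hlt : ((a :: v).drop j).length ≤ n - 1 := by
          rw [List.length_drop]
          subst hwc
          simp only [List.length_cons] at hw ⊢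
          omega
        have hn1 : 1 ≤ n := by subst hwc; simp only [List.length_cons] at hw; omega
        exact (IH (n-1) (by omega) _ hlt).2

lemma finite_P (i : Fin N) (w : List (Fin N)) : (Pset i w).Finite :=
  (finite_PQ w.length w le_rfl).1 i

lemma finite_Q (w : List (Fin N)) : (Qset (N := N) w).Finite :=
  (finite_PQ w.length w le_rfl).2

noncomputable def PF (i : Fin N) (w : List (Fin N)) : Finset (PTree N) :=
  (finite_P i w).toFinset

lemma mem_PF {i : Fin N} {w : List (Fin N)} {T : PTree N} :
    T ∈ PF i w ↔ T.Proper ∧ T.rootType = i ∧ T.leafWord = w := by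
  rw [PF, Set.Finite.mem_toFinset]; exact Iff.rfl

def Qcset (χ : List (Fin N)) (w : List (Fin N)) : Set (List (PTree N)) :=
  {ts | (∀ t ∈ ts, t.Proper) ∧ ts.map PTree.rootType = χ ∧ (ts.map PTree.leafWord).flatten = w}

lemma finite_Qc (χ w : List (Fin N)) : (Qcset (N := N) χ w).Finite :=
  (finite_Q w).subset (fun ts h => ⟨h.1, h.2.2⟩)

noncomputable def QF (χ w : List (Fin N)) : Finset (List (PTree N)) :=
  (finite_Qc χ w).toFinset

lemma mem_QF {χ w : List (Fin N)} {ts : List (PTree N)} :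
    ts ∈ QF χ w ↔ (∀ t ∈ ts, t.Proper) ∧ ts.map PTree.rootType = χ
      ∧ (ts.map PTree.leafWord).flatten = w := by
  rw [QF, Set.Finite.mem_toFinset]; exact Iff.rfl

lemma ptreeSum_eq (H : Fin N → List (Fin N) → K) (i : Fin N) (w : List (Fin N)) :
    ptreeSum H i w = ∑ T ∈ PF i w, T.energy H := by
  have h0 : ptreeSum H i w = ∑ᶠ T ∈ Pset i w, T.energy H := rfl
  rw [h0, ← Set.Finite.coe_toFinset (finite_P i w), finsum_mem_coe_finset]
  rfl

noncomputable def Ginv (H : Fin N → List (Fin N) → K) : Fin N → FreeSeries N K :=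
  fun i w => if w = [i] then 1 else if 2 ≤ w.length then ptreeSum H i w else 0

lemma Ginv_nil (H : Fin N → List (Fin N) → K) (i : Fin N) : Ginv H i [] = 0 := by
  simp [Ginv]

lemma Pset_single (i : Fin N) : Pset i [i] = {PTree.leaf i} := by
  ext T
  simp only [Set.mem_singleton_iff]
  constructor
  · rintro ⟨hT, hroot, hlw⟩
    cases T with
    | leaf j => rw [leafWord_leaf] at hlw; injection hlw with h; rw [h]
    | node j ts =>
      exfalso
      have := two_le_leafWord hT
      rw [hlw] at this
      simp at this
  · rintro rfl
    exact ⟨proper_leaf i, rfl, leafWord_leaf i⟩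

lemma Pset_small {i : Fin N} {w : List (Fin N)} (h1 : w.length ≤ 1) (h2 : w ≠ [i]) :
    Pset i w = ∅ := by
  ext T
  simp only [Set.mem_empty_iff_false, iff_false]
  rintro ⟨hT, hroot, hlw⟩
  cases T with
  | leaf j =>
    rw [leafWord_leaf] at hlw
    simp only [rootType_leaf] at hroot
    exact h2 (by rw [← hlw, hroot])
  | node j ts =>
    have := two_le_leafWord hT
    rw [hlw] at this
    omega

lemma Ginv_eq_sum (H : Fin N → List (Fin N) → K) (i : Fin N) (w : List (Fin N)) :
    Ginv H i w = ∑ T ∈ PF i w, T.energy H := by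
  show (if w = [i] then 1 else if 2 ≤ w.length then ptreeSum H i w else 0) = _
  by_cases h1 : w = [i]
  · subst h1
    rw [if_pos rfl]
    have hPF : PF i [i] = {PTree.leaf i} := by
      ext T
      rw [mem_PF, Finset.mem_singleton, ← mem_Pset, Pset_single]
      exact Iff.rfl
    rw [hPF, Finset.sum_singleton, energy_leaf]
  · rw [if_neg h1]
    by_cases h2 : 2 ≤ w.length
    · rw [if_pos h2, ptreeSum_eq]
    · rw [if_neg h2]
      have hPF : PF i w = ∅ := by
        ext T
        rw [mem_PF, ← mem_Pset, Pset_small (by omega) h1]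
        simp
      rw [hPF, Finset.sum_empty]

lemma prod_Ginv (H : Fin N → List (Fin N) → K) (χ : List (Fin N)) (w : List (Fin N)) :
    ((χ.map (Ginv H)).prod) w = ∑ ts ∈ QF χ w, (ts.map (PTree.energy H)).prod := by
  induction χ generalizing w with
  | nil =>
    rw [List.map_nil, List.prod_nil, one_apply]
    by_cases hw : w = []
    · subst hw
      have : QF ([] : List (Fin N)) [] = {[]} := by
        ext ts
        rw [mem_QF, Finset.mem_singleton]
        constructor
        · rintro ⟨-, h2, -⟩
          exact List.map_eq_nil_iff.1 h2
        · rintro rfl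
          exact ⟨by simp, rfl, rfl⟩
      rw [this, Finset.sum_singleton]
      simp
    · have : QF ([] : List (Fin N)) w = ∅ := by
        ext ts
        rw [mem_QF]
        simp only [Finset.notMem_empty, iff_false]
        rintro ⟨-, h2, h3⟩
        rw [List.map_eq_nil_iff.1 h2] at h3
        exact hw (by simpa using h3.symm)
      rw [this, Finset.sum_empty, if_neg hw]
  | cons c χ' ih =>
    rw [List.map_cons, List.prod_cons, mul_apply]
    have e : ∀ j ∈ Finset.range (w.length + 1),
        Ginv H c (w.take j) * ((χ'.map (Ginv H)).prod) (w.drop j)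
        = ∑ p ∈ (PF c (w.take j)) ×ˢ (QF χ' (w.drop j)),
            p.1.energy H * (p.2.map (PTree.energy H)).prod := by
      intro j _
      rw [Ginv_eq_sum, ih, Finset.sum_mul_sum, Finset.sum_product]
    rw [Finset.sum_congr rfl e, Finset.sum_sigma']
    refine Finset.sum_nbij' (fun p => p.2.1 :: p.2.2)
      (fun ts => match ts with
        | [] => ⟨0, (PTree.node c [], [])⟩
        | t :: rest => ⟨t.leafWord.length, (t, rest)⟩) ?_ ?_ ?_ ?_ ?_
    · rintro ⟨j, T, ts⟩ h
      simp only [Finset.mem_sigma, Finset.mem_range, Finset.mem_product] at h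
      obtain ⟨hj, hT, hts⟩ := h
      rw [mem_PF] at hT
      rw [mem_QF] at hts
      rw [mem_QF]
      refine ⟨?_, ?_, ?_⟩
      · intro t ht
        rcases List.mem_cons.1 ht with rfl | ht'
        · exact hT.1
        · exact hts.1 t ht'
      · rw [List.map_cons, hT.2.1, hts.2.1]
      · rw [List.map_cons, List.flatten_cons, hT.2.2, hts.2.2, List.take_append_drop]
    · rintro ts h
      rw [mem_QF] at h
      obtain ⟨hprop, hroot, hflat⟩ := h
      cases ts with
      | nil => simp at hroot
      | cons t rest =>
        rw [List.map_cons] at hroot hflat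
        rw [List.flatten_cons] at hflat
        injection hroot with hr1 hr2
        simp only [Finset.mem_sigma, Finset.mem_range, Finset.mem_product]
        have hlen := congrArg List.length hflat
        rw [List.length_append] at hlen
        have htake : w.take t.leafWord.length = t.leafWord := by
          rw [← hflat]; exact List.take_left' rfl
        have hdrop : w.drop t.leafWord.length = (rest.map PTree.leafWord).flatten := by
          rw [← hflat]; exact List.drop_left' rfl
        refine ⟨by omega, mem_PF.2 ⟨hprop t (by simp), hr1, htake.symm⟩,
          mem_QF.2 ⟨fun x hx => hprop x (by simp [hx]), hr2, hdrop.symm⟩⟩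
    · rintro ⟨j, T, ts⟩ h
      simp only [Finset.mem_sigma, Finset.mem_range, Finset.mem_product] at h
      obtain ⟨hj, hT, hts⟩ := h
      rw [mem_PF] at hT
      have : T.leafWord.length = j := by
        rw [hT.2.2, List.length_take]
        omega
      exact Sigma.ext this (heq_of_eq rfl)
    · rintro ts h
      rw [mem_QF] at h
      cases ts with
      | nil => simp at h
      | cons t rest => rfl
    · rintro ⟨j, T, ts⟩ h
      rw [List.map_cons, List.prod_cons]

lemma tree_recursion (H : Fin N → List (Fin N) → K) (hH : ∀ i w, w.length < 2 → H i w = 0)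
    (i : Fin N) (w : List (Fin N)) (hw : 2 ≤ w.length) :
    ptreeSum H i w = ∑ l ∈ WLL N w.length, H i l * ((Ginv H) |> fun G => ((l.map G).prod) w) := by
  classical
  have e : ∀ l ∈ WLL N w.length, H i l * ((l.map (Ginv H)).prod) w
      = ∑ ts ∈ QF l w, H i (ts.map PTree.rootType) * (ts.map (PTree.energy H)).prod := by
    intro l _
    rw [prod_Ginv, Finset.mul_sum]
    refine Finset.sum_congr rfl fun ts hts => ?_
    rw [(mem_QF.1 hts).2.1]
  show _ = ∑ l ∈ WLL N w.length, H i l * ((l.map (Ginv H)).prod) w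
  rw [Finset.sum_congr rfl e]
  have hne : ∀ l ∈ WLL N w.length,
      (∑ ts ∈ QF l w, H i (ts.map PTree.rootType) * (ts.map (PTree.energy H)).prod) ≠ 0
      → 2 ≤ l.length := by
    intro l _ hne0
    by_contra hlt
    refine hne0 (Finset.sum_eq_zero fun ts hts => ?_)
    rw [(mem_QF.1 hts).2.1, hH i l (by omega), zero_mul]
  rw [← Finset.sum_filter_of_ne hne, ptreeSum_eq, Finset.sum_sigma']
  refine Finset.sum_nbij'
    (fun T => match T with
      | .leaf _ => ⟨[], ([] : List (PTree N))⟩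
      | .node _ ts => ⟨ts.map PTree.rootType, ts⟩)
    (fun p => PTree.node i p.2) ?_ ?_ ?_ ?_ ?_
  · rintro T hT
    rw [mem_PF] at hT
    obtain ⟨hprop, hroot, hlw⟩ := hT
    cases T with
    | leaf j =>
      exfalso
      rw [leafWord_leaf] at hlw
      have := congrArg List.length hlw
      simp at this
      omega
    | node j ts =>
      obtain ⟨h2, hts⟩ := proper_node.1 hprop
      simp only [Finset.mem_sigma, Finset.mem_filter]
      rw [leafWord_node] at hlw
      refine ⟨⟨mem_WLL.2 ?_, by rw [List.length_map]; omega⟩,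
        mem_QF.2 ⟨hts, rfl, hlw⟩⟩
      rw [List.length_map, ← hlw]
      exact len_le_flatten ts hts
  · rintro ⟨l, ts⟩ h
    simp only [Finset.mem_sigma, Finset.mem_filter] at h
    obtain ⟨⟨hl, h2⟩, hts⟩ := h
    rw [mem_QF] at hts
    obtain ⟨hprop, hroot, hflat⟩ := hts
    have hlen : ts.length = l.length := by rw [← hroot, List.length_map]
    show PTree.node i ts ∈ PF i w
    refine mem_PF.2 ⟨proper_node.2 ⟨by omega, hprop⟩, rfl, by rw [leafWord_node]; exact hflat⟩
  · rintro T hT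
    rw [mem_PF] at hT
    obtain ⟨hprop, hroot, hlw⟩ := hT
    cases T with
    | leaf j =>
      exfalso
      rw [leafWord_leaf] at hlw
      have := congrArg List.length hlw
      simp at this
      omega
    | node j ts =>
      simp only [rootType_node] at hroot
      rw [hroot]
  · rintro ⟨l, ts⟩ h
    simp only [Finset.mem_sigma, Finset.mem_filter] at h
    exact Sigma.ext (mem_QF.1 h.2).2.1 (heq_of_eq rfl)
  · rintro T hT
    rw [mem_PF] at hT
    obtain ⟨hprop, hroot, hlw⟩ := hT
    cases T with
    | leaf j =>
      exfalso
      rw [leafWord_leaf] at hlw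
      have := congrArg List.length hlw
      simp at this
      omega
    | node j ts =>
      rw [energy_node]
      simp only [rootType_node] at hroot
      rw [hroot]

lemma scomp_F_Ginv (H : Fin N → List (Fin N) → K) (hH : ∀ i w, w.length < 2 → H i w = 0)
    (i : Fin N) (w : List (Fin N)) :
    scomp (fun v => if v = [i] then 1 else -H i v) (Ginv H) w
      = (if w = [i] then 1 else 0) := by
  have hsplit : ∀ l : List (Fin N),
      (if l = [i] then (1 : K) else -H i l) = mono [i] l - H i l := by
    intro l
    by_cases h : l = [i]
    · subst h
      rw [if_pos rfl, hH i [i] (by simp)]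
      simp [mono]
    · rw [if_neg h]
      show _ = (if l = [i] then (1:K) else 0) - H i l
      rw [if_neg h, zero_sub]
  show (∑ l ∈ WLL N w.length,
      (if l = [i] then (1 : K) else -H i l) * ((l.map (Ginv H)).prod) w) = _
  have e : ∀ l ∈ WLL N w.length,
      (if l = [i] then (1 : K) else -H i l) * ((l.map (Ginv H)).prod) w
      = mono [i] l * ((l.map (Ginv H)).prod) w - H i l * ((l.map (Ginv H)).prod) w := by
    intro l _
    rw [hsplit l, sub_mul]
  rw [Finset.sum_congr rfl e, Finset.sum_sub_distrib]
  have h1 : (∑ l ∈ WLL N w.length, mono [i] l * ((l.map (Ginv H)).prod) w) = Ginv H i w :=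
    scomp_mono_left (Ginv H) (Ginv_nil H) i w
  have h2 : (∑ l ∈ WLL N w.length, H i l * ((l.map (Ginv H)).prod) w)
      = if 2 ≤ w.length then ptreeSum H i w else 0 := by
    by_cases hw2 : 2 ≤ w.length
    · rw [if_pos hw2, tree_recursion H hH i w hw2]
    · rw [if_neg hw2]
      refine Finset.sum_eq_zero fun l hl => ?_
      rw [mem_WLL] at hl
      rw [hH i l (by omega), zero_mul]
  rw [h1, h2]
  show (if w = [i] then 1 else if 2 ≤ w.length then ptreeSum H i w else 0) - _ = _
  by_cases h : w = [i]
  · subst h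
    rw [if_pos rfl, if_pos rfl, if_neg (by simp), sub_zero]
  · rw [if_neg h, if_neg h, sub_self]

lemma fcomp_FofH (H : Fin N → List (Fin N) → K) (hH : ∀ i w, w.length < 2 → H i w = 0) :
    fcomp (fun i => fun v => if v = [i] then 1 else -H i v) (Ginv H)
      = (fun i w => if w = [i] then 1 else 0) := by
  funext i w
  refine (fcomp_eq_scomp _ _ i w).trans ?_
  exact scomp_F_Ginv H hH i w

end FreeInv

/-- if `Fᵢ = Xᵢ - ∑_{k≥2} ∑_{κ ∈ [N]^k} H_{i,κ} X_κ`, then `F` has a two-sided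
compositional inverse `G` with `Gᵢ = Xᵢ + ∑_{k≥2} ∑_κ G_{i,κ} X_κ`, where
`G_{i,κ} = ∑_{T ∈ S⃗_{i,κ}} ∏_{v internal} H_{τ(v),μ⃗(v)}`. -/
theorem free_inversion {N : ℕ} {K : Type*} [CommRing K]
    (H : Fin N → List (Fin N) → K) (hH : ∀ i w, w.length < 2 → H i w = 0)
    (F : Fin N → FreeSeries N K)
    (hFdef : ∀ i w, F i w = if w = [i] then 1 else -H i w) :
    ∃ G : Fin N → FreeSeries N K,
      (∀ i w, G i w =
        if w = [i] then 1 else if 2 ≤ w.length then ptreeSum H i w else 0) ∧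
      fcomp F G = (fun i w => if w = [i] then 1 else 0) ∧
      fcomp G F = (fun i w => if w = [i] then 1 else 0) := by
  classical
  have hF : F = fun i => fun v => if v = [i] then 1 else -H i v := by
    funext i v
    exact hFdef i v
  subst hF
  set F : Fin N → FreeSeries N K := fun i => fun v => if v = [i] then 1 else -H i v with hFdef2
  refine ⟨FreeInv.Ginv H, fun i w => rfl, ?_, ?_⟩
  · exact FreeInv.fcomp_FofH H hH
  · -- left inverse
    have hFG : fcomp F (FreeInv.Ginv H) = (fun i w => if w = [i] then 1 else 0) :=
      FreeInv.fcomp_FofH H hH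
    set H' : Fin N → List (Fin N) → K :=
      fun i v => if v = [i] then 0 else -(FreeInv.Ginv H i v) with hH'def
    have hH' : ∀ i v, v.length < 2 → H' i v = 0 := by
      intro i v hv
      show (if v = [i] then 0 else -(FreeInv.Ginv H i v)) = 0
      by_cases h : v = [i]
      · rw [if_pos h]
      · rw [if_neg h]
        show -(if v = [i] then 1 else if 2 ≤ v.length then ptreeSum H i v else 0) = 0
        rw [if_neg h, if_neg (by omega)]
        exact neg_zero
    have hG_eq : (fun i => fun v => if v = [i] then (1:K) else -H' i v) = FreeInv.Ginv H := by
      funext i v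
      by_cases h : v = [i]
      · subst h
        rw [if_pos rfl]
        show _ = if ([i] : List (Fin N)) = [i] then (1:K) else _
        rw [if_pos rfl]
      · rw [if_neg h]
        show -(if v = [i] then (0:K) else -(FreeInv.Ginv H i v)) = _
        rw [if_neg h, neg_neg]
    have hinv2 : fcomp (FreeInv.Ginv H) (FreeInv.Ginv H')
        = (fun i w => if w = [i] then 1 else 0) := by
      rw [← hG_eq]
      exact FreeInv.fcomp_FofH H' hH'
    have step1 : ∀ (i : Fin N) (w : List (Fin N)), FreeInv.Ginv H' i w
        = FreeInv.scomp ((fcomp F (FreeInv.Ginv H)) i) (FreeInv.Ginv H') w := by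
      intro i w
      rw [hFG]
      exact (FreeInv.scomp_mono_left (FreeInv.Ginv H') (fun c => FreeInv.Ginv_nil H' c) i w).symm
    have step2 : ∀ (i : Fin N) (w : List (Fin N)),
        FreeInv.scomp ((fcomp F (FreeInv.Ginv H)) i) (FreeInv.Ginv H') w
        = FreeInv.scomp (F i) (fcomp (FreeInv.Ginv H) (FreeInv.Ginv H')) w := by
      intro i w
      have h1 : (fcomp F (FreeInv.Ginv H)) i = FreeInv.scomp (F i) (FreeInv.Ginv H) := by
        funext v
        exact FreeInv.fcomp_eq_scomp F (FreeInv.Ginv H) i v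
      rw [h1, FreeInv.scomp_assoc (F i) (FreeInv.Ginv H) (FreeInv.Ginv H')
        (fun c => FreeInv.Ginv_nil H c) (fun c => FreeInv.Ginv_nil H' c)]
      have h2 : (fun c => FreeInv.scomp (FreeInv.Ginv H c) (FreeInv.Ginv H'))
          = fcomp (FreeInv.Ginv H) (FreeInv.Ginv H') := by
        funext c v
        exact (FreeInv.fcomp_eq_scomp (FreeInv.Ginv H) (FreeInv.Ginv H') c v).symm
      rw [h2]
    have step3 : ∀ (i : Fin N) (w : List (Fin N)),
        FreeInv.scomp (F i) (fcomp (FreeInv.Ginv H) (FreeInv.Ginv H')) w = F i w := by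
      intro i w
      rw [hinv2]
      exact FreeInv.scomp_mono_right (F i) w
    have hF2 : FreeInv.Ginv H' = F :=
      funext fun i => funext fun w => (step1 i w).trans ((step2 i w).trans (step3 i w))
    rw [← hF2]
    exact hinv2
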